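/- Let $d \ge 1$, $\Delta t > 0$, $g \in \mathbb{R}$, and let $a \in \mathbb{R}^d$ be a fixed vector. Let $W : \Omega \to \mathbb{R}^d$ be a random vector whose coordinates are independent centered real Gaussians with variance $\Delta t$. Then for every real $d \times d$ orthogonal matrix $Q$, $\mathbb{E}\big[\lVert a + g\,(Q - I_d) W \rVert^2\big] = \lVert a \rVert^2 + 2 g^2 \Delta t \cdot \mathrm{tr}(I_d - Q)$. -/

import Mathlib

open MeasureTheory ProbabilityTheory Matrix NNReal Real Filter
open scoped ENNReal

section gaussAux

lemma aux_tendsto_mul_exp {b : ℝ} (hb : 0 < b) :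
    Tendsto (fun x : ℝ => x * Real.exp (-b * x ^ 2)) atTop (nhds 0) := by
  have h := rpow_mul_exp_neg_mul_sq_isLittleO_exp_neg hb 1
  have h2 : Tendsto (fun x : ℝ => Real.exp (-(1/2) * x)) atTop (nhds 0) := by
    exact Real.tendsto_exp_atBot.comp
      (tendsto_id.const_mul_atTop_of_neg (by norm_num : (-(1/2) : ℝ) < 0))
  have h3 := h.isBigO.trans_tendsto h2
  simpa [Real.rpow_one] using h3

lemma aux_tendsto_mul_exp_bot {b : ℝ} (hb : 0 < b) :
    Tendsto (fun x : ℝ => x * Real.exp (-b * x ^ 2)) atBot (nhds 0) := by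
  have h := (aux_tendsto_mul_exp hb).comp tendsto_neg_atBot_atTop
  have h2 := h.neg
  simpa [Function.comp_def, neg_mul, neg_neg] using h2

lemma integrable_sq_mul_exp {b : ℝ} (hb : 0 < b) :
    Integrable (fun x : ℝ => x ^ 2 * Real.exp (-b * x ^ 2)) := by
  have h := integrable_rpow_mul_exp_neg_mul_sq hb (s := 2) (by norm_num)
  have e : ∀ x : ℝ, x ^ (2 : ℝ) = x ^ (2 : ℕ) := fun x => by
    rw [show (2 : ℝ) = ((2 : ℕ) : ℝ) by norm_num, Real.rpow_natCast]
  simpa [e] using h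

lemma integrable_id_mul_exp {b : ℝ} (hb : 0 < b) :
    Integrable (fun x : ℝ => x * Real.exp (-b * x ^ 2)) := by
  have h := integrable_rpow_mul_exp_neg_mul_sq hb (s := 1) (by norm_num)
  simpa [Real.rpow_one] using h

lemma integral_id_mul_exp {b : ℝ} (hb : 0 < b) :
    ∫ x : ℝ, x * Real.exp (-b * x ^ 2) = 0 := by
  have h := integral_neg_eq_self (fun x : ℝ => x * Real.exp (-b * x ^ 2))
    (volume : Measure ℝ)
  simp only [neg_mul, neg_sq, integral_neg] at h ⊢
  linarith [h]

lemma integral_sq_mul_exp {b : ℝ} (hb : 0 < b) :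
    ∫ x : ℝ, x ^ 2 * Real.exp (-b * x ^ 2) = Real.sqrt (π / b) / (2 * b) := by
  have hderiv : ∀ x : ℝ, HasDerivAt (fun x : ℝ => x * Real.exp (-b * x ^ 2))
      (Real.exp (-b * x ^ 2) - 2 * b * (x ^ 2 * Real.exp (-b * x ^ 2))) x := by
    intro x
    have h1 : HasDerivAt (fun x : ℝ => -b * x ^ 2) (-b * (2 * x)) x := by
      simpa using (hasDerivAt_pow 2 x).const_mul (-b)
    have h2 := h1.exp
    have h3 : HasDerivAt (fun y => y * Real.exp (-b * y ^ 2))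
        (1 * Real.exp (-b * x ^ 2) + x * (Real.exp (-b * x ^ 2) * (-b * (2 * x)))) x := (hasDerivAt_id x).mul h2
    convert h3 using 1
    simp only [id_eq, one_mul]
    ring
  have hint : Integrable (fun x : ℝ =>
      Real.exp (-b * x ^ 2) - 2 * b * (x ^ 2 * Real.exp (-b * x ^ 2))) :=
    (integrable_exp_neg_mul_sq hb).sub ((integrable_sq_mul_exp hb).const_mul (2 * b))
  have h0 := integral_of_hasDerivAt_of_tendsto hderiv hint
    (aux_tendsto_mul_exp_bot hb) (aux_tendsto_mul_exp hb)
  rw [integral_sub (integrable_exp_neg_mul_sq hb)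
    ((integrable_sq_mul_exp hb).const_mul (2 * b)), integral_const_mul,
    integral_gaussian] at h0
  have h2b : (2 * b) ≠ 0 := by positivity
  field_simp at h0 ⊢
  linarith [h0]

variable {v : ℝ≥0}

lemma gauss_density_eq (hv : v ≠ 0) :
    gaussianReal 0 v
      = (volume : Measure ℝ).withDensity
        (fun x => ((gaussianPDFReal 0 v x).toNNReal : ℝ≥0∞)) := by
  rw [gaussianReal_of_var_ne_zero 0 hv]
  rfl

lemma gauss_pdf_eq (hv : v ≠ 0) (x : ℝ) :
    gaussianPDFReal 0 v x
      = (Real.sqrt (2 * π * v))⁻¹ * Real.exp (-(2 * (v : ℝ))⁻¹ * x ^ 2) := by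
  have hvpos : (0 : ℝ) < v := by positivity
  rw [gaussianPDFReal]
  congr 1
  rw [sub_zero]
  field_simp

lemma gauss_integral_eq (hv : v ≠ 0) (g : ℝ → ℝ) :
    ∫ x, g x ∂(gaussianReal 0 v) = ∫ x, gaussianPDFReal 0 v x * g x := by
  rw [gauss_density_eq hv,
    integral_withDensity_eq_integral_smul ((measurable_gaussianPDFReal 0 v).real_toNNReal) g]
  refine integral_congr_ae (Filter.Eventually.of_forall fun x => ?_)
  simp [NNReal.smul_def, Real.coe_toNNReal _ (gaussianPDFReal_nonneg 0 v x)]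

lemma gauss_integrable_iff (hv : v ≠ 0) (g : ℝ → ℝ) :
    Integrable g (gaussianReal 0 v)
      ↔ Integrable (fun x => gaussianPDFReal 0 v x * g x) volume := by
  rw [gauss_density_eq hv,
    integrable_withDensity_iff_integrable_smul ((measurable_gaussianPDFReal 0 v).real_toNNReal)]
  refine integrable_congr (Filter.Eventually.of_forall fun x => ?_)
  simp [NNReal.smul_def, Real.coe_toNNReal _ (gaussianPDFReal_nonneg 0 v x)]

lemma hb_pos (hv : v ≠ 0) : (0 : ℝ) < (2 * (v : ℝ))⁻¹ := by
  have : (0 : ℝ) < v := by positivity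
  positivity

lemma integrable_id_gauss (hv : v ≠ 0) : Integrable (fun x : ℝ => x) (gaussianReal 0 v) := by
  rw [gauss_integrable_iff hv]
  have h := (integrable_id_mul_exp (hb_pos hv)).const_mul (Real.sqrt (2 * π * v))⁻¹
  refine h.congr (Filter.Eventually.of_forall fun x => ?_)
  show (Real.sqrt (2 * π * (v:ℝ)))⁻¹ * (x * Real.exp (-(2 * (v : ℝ))⁻¹ * x ^ 2))
      = gaussianPDFReal 0 v x * x
  rw [gauss_pdf_eq hv]
  ring

lemma integrable_sq_gauss (hv : v ≠ 0) : Integrable (fun x : ℝ => x ^ 2) (gaussianReal 0 v) := by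
  rw [gauss_integrable_iff hv]
  have h := (integrable_sq_mul_exp (hb_pos hv)).const_mul (Real.sqrt (2 * π * v))⁻¹
  refine h.congr (Filter.Eventually.of_forall fun x => ?_)
  show (Real.sqrt (2 * π * (v:ℝ)))⁻¹ * (x ^ 2 * Real.exp (-(2 * (v : ℝ))⁻¹ * x ^ 2))
      = gaussianPDFReal 0 v x * x ^ 2
  rw [gauss_pdf_eq hv]
  ring

lemma integral_id_gauss (hv : v ≠ 0) : ∫ x, x ∂(gaussianReal 0 v) = 0 := by
  rw [gauss_integral_eq hv]
  have : ∀ x : ℝ, gaussianPDFReal 0 v x * x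
      = (Real.sqrt (2 * π * v))⁻¹ * (x * Real.exp (-(2 * (v : ℝ))⁻¹ * x ^ 2)) := by
    intro x; rw [gauss_pdf_eq hv]; ring
  simp_rw [this]
  rw [integral_const_mul, integral_id_mul_exp (hb_pos hv), mul_zero]

lemma integral_sq_gauss (hv : v ≠ 0) : ∫ x, x ^ 2 ∂(gaussianReal 0 v) = v := by
  have hvpos : (0 : ℝ) < v := by positivity
  rw [gauss_integral_eq hv]
  have : ∀ x : ℝ, gaussianPDFReal 0 v x * x ^ 2
      = (Real.sqrt (2 * π * v))⁻¹ * (x ^ 2 * Real.exp (-(2 * (v : ℝ))⁻¹ * x ^ 2)) := by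
    intro x; rw [gauss_pdf_eq hv]; ring
  simp_rw [this]
  rw [integral_const_mul, integral_sq_mul_exp (hb_pos hv)]
  have h1 : π / (2 * (v : ℝ))⁻¹ = 2 * π * v := by field_simp
  have h2 : (0:ℝ) < Real.sqrt (2 * π * v) := Real.sqrt_pos.mpr (by positivity)
  rw [h1]
  field_simp

end gaussAux

lemma sum_expand {d : ℕ} (M : Matrix (Fin d) (Fin d) ℝ) (a : Fin d → ℝ) (g : ℝ)
    (x : Fin d → ℝ) :
    ∑ i, (a i + g * ∑ j, M i j * x j) ^ 2
      = (∑ i, (a i) ^ 2) + ((∑ j, (∑ i, 2 * g * a i * M i j) * x j)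
        + ∑ j, ∑ k, (g ^ 2 * ∑ i, M i j * M i k) * (x j * x k)) := by
  have h1 : ∀ i : Fin d, (a i + g * ∑ j, M i j * x j) ^ 2
      = (a i) ^ 2 + ((∑ j, (2 * g * a i * M i j) * x j)
        + ∑ j, ∑ k, (g ^ 2 * (M i j * M i k)) * (x j * x k)) := by
    intro i
    have e1 : ∑ j, (2 * g * a i * M i j) * x j
        = 2 * g * a i * ∑ j, M i j * x j := by
      rw [Finset.mul_sum]
      exact Finset.sum_congr rfl fun j _ => by ring
    have e2 : ∑ j, ∑ k, (g ^ 2 * (M i j * M i k)) * (x j * x k)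
        = g ^ 2 * ((∑ j, M i j * x j) * (∑ k, M i k * x k)) := by
      rw [Finset.sum_mul_sum, Finset.mul_sum]
      exact Finset.sum_congr rfl fun j _ => by
        rw [Finset.mul_sum]
        exact Finset.sum_congr rfl fun k _ => by ring
    rw [e1, e2]
    ring
  rw [Finset.sum_congr rfl fun i _ => h1 i, Finset.sum_add_distrib, Finset.sum_add_distrib]
  congr 1
  congr 1
  · rw [Finset.sum_comm]
    refine Finset.sum_congr rfl fun j _ => ?_
    rw [Finset.sum_mul]
  · rw [Finset.sum_comm]
    refine Finset.sum_congr rfl fun j _ => ?_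
    rw [Finset.sum_comm]
    refine Finset.sum_congr rfl fun k _ => ?_
    rw [Finset.mul_sum, Finset.sum_mul]

/-- Expected one-step increment: for fixed `a ∈ ℝᵈ`, `g ∈ ℝ`, a Gaussian vector `W`
with i.i.d. centered coordinates of variance `Δt`, and orthogonal `Q`,
`E[‖a + g (Q - I) W‖²] = ‖a‖² + 2 g² Δt tr(I - Q)`. -/
theorem stmt_5 {Ω : Type*} [MeasurableSpace Ω] (μ : Measure Ω) [IsProbabilityMeasure μ]
    {d : ℕ} (hd : 1 ≤ d) (Δt : ℝ≥0) (hΔt : 0 < Δt) (g : ℝ)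
    (a : EuclideanSpace ℝ (Fin d))
    (W : Ω → EuclideanSpace ℝ (Fin d))
    (hindep : iIndepFun
      (fun i ω => W ω i) μ)
    (hlaw : ∀ i : Fin d, Measure.map (fun ω => W ω i) μ = gaussianReal 0 Δt)
    (Q : Matrix (Fin d) (Fin d) ℝ) (hQ : Q * Qᵀ = 1) :
    (∫ ω, ‖a + g • (WithLp.equiv 2 (Fin d → ℝ)).symm ((Q - 1).mulVec (W ω))‖ ^ 2 ∂μ)
      = ‖a‖ ^ 2 + 2 * g ^ 2 * (Δt : ℝ) * (1 - Q).trace := by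
  classical
  have hv : Δt ≠ 0 := hΔt.ne'
  set M : Matrix (Fin d) (Fin d) ℝ := Q - 1 with hM
  set f : Fin d → Ω → ℝ := fun i ω => W ω i with hf
  -- measurability of coordinates
  have hmeas : ∀ i, AEMeasurable (f i) μ := by
    intro i
    by_contra h
    have h1 := hlaw i
    rw [Measure.map_of_not_aemeasurable h] at h1
    have h2 : (gaussianReal 0 Δt) Set.univ = 1 := measure_univ
    rw [← h1] at h2
    simp at h2
  -- first moments
  have hInt1 : ∀ i, Integrable (f i) μ := by
    intro i
    have h : Integrable (fun x : ℝ => x) (Measure.map (f i) μ) := by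
      rw [hlaw i]; exact integrable_id_gauss hv
    exact (integrable_map_measure aestronglyMeasurable_id (hmeas i)).mp h
  have hE1 : ∀ i, ∫ ω, f i ω ∂μ = 0 := by
    intro i
    have h : ∫ x, x ∂(Measure.map (f i) μ) = 0 := by
      rw [hlaw i]; exact integral_id_gauss hv
    rwa [integral_map (hmeas i) (f := fun x : ℝ => x) aestronglyMeasurable_id] at h
  -- second moments
  have hIntsq : ∀ i, Integrable (fun ω => f i ω * f i ω) μ := by
    intro i
    have h : Integrable (fun x : ℝ => x ^ 2) (Measure.map (f i) μ) := by
      rw [hlaw i]; exact integrable_sq_gauss hv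
    have h2 := (integrable_map_measure
      (by fun_prop : AEStronglyMeasurable (fun x : ℝ => x ^ 2) (Measure.map (f i) μ))
      (hmeas i)).mp h
    refine h2.congr (Filter.Eventually.of_forall fun ω => ?_)
    simp [sq]
  have hEsq : ∀ i, ∫ ω, f i ω * f i ω ∂μ = (Δt : ℝ) := by
    intro i
    have h : ∫ x, x ^ 2 ∂(Measure.map (f i) μ) = (Δt : ℝ) := by
      rw [hlaw i]; exact integral_sq_gauss hv
    rw [integral_map (hmeas i)
      (by fun_prop : AEStronglyMeasurable (fun x : ℝ => x ^ 2) (Measure.map (f i) μ))] at h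
    rw [← h]
    exact integral_congr_ae (Filter.Eventually.of_forall fun ω => by simp [sq])
  have hInt2 : ∀ i j, Integrable (fun ω => f i ω * f j ω) μ := by
    intro i j
    rcases eq_or_ne i j with rfl | hij
    · exact hIntsq i
    · have h := (hindep.indepFun hij).integrable_mul (hInt1 i) (hInt1 j)
      exact h.congr (Filter.Eventually.of_forall fun ω => rfl)
  have hE2 : ∀ i j, ∫ ω, f i ω * f j ω ∂μ = if i = j then (Δt : ℝ) else 0 := by
    intro i j
    rcases eq_or_ne i j with rfl | hij
    · rw [if_pos rfl]; exact hEsq i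
    · rw [if_neg hij]
      have h := (hindep.indepFun hij).integral_mul_eq_mul_integral (hInt1 i).1 (hInt1 j).1
      have h2 : ∫ ω, f i ω * f j ω ∂μ = (∫ ω, f i ω ∂μ) * ∫ ω, f j ω ∂μ := h
      rw [h2, hE1 i, zero_mul]
  -- pointwise expansion of the norm
  have hnorm : ∀ (y : EuclideanSpace ℝ (Fin d)), ‖y‖ ^ 2 = ∑ i, (y i) ^ 2 := by
    intro y
    rw [EuclideanSpace.norm_eq, Real.sq_sqrt (Finset.sum_nonneg fun i _ => sq_nonneg _)]
    exact Finset.sum_congr rfl fun i _ => by rw [Real.norm_eq_abs, sq_abs]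
  have hpt : ∀ ω, ‖a + g • (WithLp.equiv 2 (Fin d → ℝ)).symm (M.mulVec (W ω))‖ ^ 2
      = (∑ i, (a i) ^ 2) + ((∑ j, (∑ i, 2 * g * a i * M i j) * f j ω)
        + ∑ j, ∑ k, (g ^ 2 * ∑ i, M i j * M i k) * (f j ω * f k ω)) := by
    intro ω
    rw [hnorm, ← sum_expand M a g (fun j => f j ω)]
    refine Finset.sum_congr rfl fun i _ => ?_
    congr 1
  -- integrability of the pieces
  have hI_lin : Integrable (fun ω => ∑ j, (∑ i, 2 * g * a i * M i j) * f j ω) μ :=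
    integrable_finset_sum _ fun j _ => (hInt1 j).const_mul _
  have hI_quad : Integrable
      (fun ω => ∑ j, ∑ k, (g ^ 2 * ∑ i, M i j * M i k) * (f j ω * f k ω)) μ :=
    integrable_finset_sum _ fun j _ => integrable_finset_sum _ fun k _ =>
      (hInt2 j k).const_mul _
  -- compute the integral
  have hlin0 : ∀ j : Fin d, ∫ ω, (∑ i, 2 * g * a i * M i j) * f j ω ∂μ = 0 := by
    intro j
    rw [integral_const_mul, hE1, mul_zero]
  have hquadj : ∀ j : Fin d,
      ∫ ω, ∑ k, (g ^ 2 * ∑ i, M i j * M i k) * (f j ω * f k ω) ∂μ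
        = (g ^ 2 * ∑ i, M i j * M i j) * (Δt : ℝ) := by
    intro j
    rw [integral_finset_sum _ fun k _ => (hInt2 j k).const_mul _]
    have : ∀ k : Fin d, ∫ ω, (g ^ 2 * ∑ i, M i j * M i k) * (f j ω * f k ω) ∂μ
        = if j = k then (g ^ 2 * ∑ i, M i j * M i k) * (Δt : ℝ) else 0 := by
      intro k
      rw [integral_const_mul, hE2 j k]
      split_ifs <;> simp
    rw [Finset.sum_congr rfl fun k _ => this k]
    simp
  have hmain : (∫ ω, ‖a + g • (WithLp.equiv 2 (Fin d → ℝ)).symm (M.mulVec (W ω))‖ ^ 2 ∂μ)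
      = (∑ i, (a i) ^ 2) + ∑ j, (g ^ 2 * ∑ i, M i j * M i j) * (Δt : ℝ) := by
    rw [integral_congr_ae (Filter.Eventually.of_forall hpt)]
    have hIsum : Integrable (fun ω => (∑ j, (∑ i, 2 * g * a i * M i j) * f j ω)
        + ∑ j, ∑ k, (g ^ 2 * ∑ i, M i j * M i k) * (f j ω * f k ω)) μ := hI_lin.add hI_quad
    rw [integral_add (integrable_const _) hIsum, integral_const,
      integral_add hI_lin hI_quad,
      integral_finset_sum _ fun j _ => (hInt1 j).const_mul _,
      integral_finset_sum _ fun j _ => integrable_finset_sum _ fun k _ =>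
        (hInt2 j k).const_mul _]
    simp only [measure_univ, probReal_univ, ENNReal.toReal_one, one_smul]
    rw [Finset.sum_congr rfl fun j _ => hlin0 j, Finset.sum_congr rfl fun j _ => hquadj j]
    simp
  -- trace identity
  have hMM : M * Mᵀ = 1 - Q - Qᵀ + 1 := by
    have h1 : M * Mᵀ = Q * Qᵀ - Q - Qᵀ + 1 := by
      rw [hM, Matrix.transpose_sub, Matrix.transpose_one]
      noncomm_ring
    rw [h1, hQ]
  have htr : ∑ j, ∑ i, M i j * M i j = 2 * (1 - Q).trace := by
    have h1 : (M * Mᵀ).trace = ∑ i, ∑ j, M i j * M i j := by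
      simp [Matrix.trace, Matrix.mul_apply, Matrix.diag]
    have h2 : (M * Mᵀ).trace = 2 * (1 - Q).trace := by
      rw [hMM]
      simp only [Matrix.trace_add, Matrix.trace_sub, Matrix.trace_transpose]
      ring
    rw [Finset.sum_comm, ← h1, h2]
  rw [hmain, hnorm a]
  congr 1
  calc ∑ j, (g ^ 2 * ∑ i, M i j * M i j) * (Δt : ℝ)
      = (g ^ 2 * ∑ j, ∑ i, M i j * M i j) * (Δt : ℝ) := by
        rw [← Finset.sum_mul, ← Finset.mul_sum]
    _ = 2 * g ^ 2 * (Δt : ℝ) * (1 - Q).trace := by rw [htr]; ring
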